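/- Let b and ξ be positive real numbers with 1/2 ≤ ξ < b⁻¹ − 1. Define G(x,y) = (2b((4/3)x + b) + x(y−1))/(x + 2b) − (xy + ξ⁻¹ y²)/((1/3)x + b) + 2y − 1 for x, y ≥ 0. Then there exists δ > 0 such that G(x,y) ≤ −δ for all x, y ∈ [0, ∞); in particular sup_{x,y ∈ [0,∞)} G(x,y) < 0. -/

import Mathlib

set_option maxHeartbeats 1000000 in
/-- Lemma: if `1/2 ≤ ξ < b⁻¹ − 1` then `G` has a negative upper bound on `[0,∞)²`. -/
theorem stmt_7 (b ξ : ℝ) (hb : 0 < b) (hξ0 : 0 < ξ)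
    (hξ1 : 1 / 2 ≤ ξ) (hξ2 : ξ < b⁻¹ - 1)
    (G : ℝ → ℝ → ℝ)
    (hG : ∀ x y : ℝ, G x y =
      (2 * b * ((4 / 3) * x + b) + x * (y - 1)) / (x + 2 * b)
        - (x * y + ξ⁻¹ * y ^ 2) / ((1 / 3) * x + b) + 2 * y - 1) :
    ∃ δ > (0 : ℝ), ∀ x y : ℝ, 0 ≤ x → 0 ≤ y → G x y ≤ -δ := by
  have h1 : ξ + 1 < 1 / b := by
    rw [inv_eq_one_div] at hξ2; linarith
  have h2 : (ξ + 1) * b < 1 := (lt_div_iff₀ hb).mp h1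
  have hε : 0 < 1 - b - ξ * b := by nlinarith
  set ε : ℝ := 1 - b - ξ * b with hεdef
  -- 3b ≤ 2 - 2ε, i.e. b ≤ 2ξb, from ξ ≥ 1/2
  have hb3 : 3 * b ≤ 2 - 2 * ε := by
    have : b ≤ 2 * ξ * b := by nlinarith
    simp only [hεdef]; nlinarith
  refine ⟨min (5 / 84) ε, lt_min (by norm_num) hε, ?_⟩
  intro x y hx hy
  set δ : ℝ := min (5 / 84) ε with hδdef
  have hδ0 : 0 < δ := lt_min (by norm_num) hε
  have hδ1 : δ ≤ 5 / 84 := min_le_left _ _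
  have hδ2 : δ ≤ ε := min_le_right _ _
  have hd1 : (0 : ℝ) < x + 2 * b := by linarith
  have hd2 : (0 : ℝ) < (1 / 3) * x + b := by linarith
  rw [hG]
  -- the key polynomial inequality (after multiplying through by ξ and denominators)
  have key2 : ξ * ((2 * b * ((4 / 3) * x + b) + x * (y - 1)) * ((1 / 3) * x + b))
      - (ξ * (x * y) + y ^ 2) * (x + 2 * b)
      + ξ * (2 * y - 1 + δ) * ((x + 2 * b) * ((1 / 3) * x + b)) ≤ 0 := by
    set K : ℝ := ξ * ((2 * b * ((4 / 3) * x + b) + x * (y - 1)) * ((1 / 3) * x + b))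
      - (ξ * (x * y) + y ^ 2) * (x + 2 * b)
      + ξ * (2 * y - 1 + δ) * ((x + 2 * b) * ((1 / 3) * x + b)) with hK
    have hT : 36 * (x + 2 * b) * K =
        ξ * ((32 * b - 24 + 12 * δ) * x ^ 3
          + (184 * b - 144 + 49 * (ξ * b) + 84 * δ) * b * x ^ 2
          + 24 * (13 * b - 11 + 7 * (ξ * b) + 8 * δ) * b ^ 2 * x
          + 144 * (δ - (1 - b - ξ * b)) * b ^ 3)
        - (6 * (x + 2 * b) * y - ξ * b * (7 * x + 12 * b)) ^ 2 := by
      rw [hK]; ring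
    -- each cubic coefficient is nonpositive
    have hc3 : 32 * b - 24 + 12 * δ ≤ 0 := by linarith
    have hc2 : 184 * b - 144 + 49 * (ξ * b) + 84 * δ ≤ 0 := by
      have hξb : ξ * b ≤ 1 - b - ε := by rw [hεdef]; linarith
      linarith
    have hc1 : 13 * b - 11 + 7 * (ξ * b) + 8 * δ ≤ 0 := by
      have hξb : ξ * b ≤ 1 - b - ε := by rw [hεdef]; linarith
      linarith
    have hc0 : δ - (1 - b - ξ * b) ≤ 0 := by
      simp only [← hεdef]; linarith
    have hcube : ξ * ((32 * b - 24 + 12 * δ) * x ^ 3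
          + (184 * b - 144 + 49 * (ξ * b) + 84 * δ) * b * x ^ 2
          + 24 * (13 * b - 11 + 7 * (ξ * b) + 8 * δ) * b ^ 2 * x
          + 144 * (δ - (1 - b - ξ * b)) * b ^ 3) ≤ 0 := by
      have hx3 : (0:ℝ) ≤ x ^ 3 := by positivity
      have hx2 : (0:ℝ) ≤ x ^ 2 := by positivity
      have hb2 : (0:ℝ) ≤ b ^ 2 := by positivity
      have hb3' : (0:ℝ) ≤ b ^ 3 := by positivity
      have t3 : (32 * b - 24 + 12 * δ) * x ^ 3 ≤ 0 := mul_nonpos_of_nonpos_of_nonneg hc3 hx3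
      have t2 : (184 * b - 144 + 49 * (ξ * b) + 84 * δ) * b * x ^ 2 ≤ 0 := by
        apply mul_nonpos_of_nonpos_of_nonneg _ hx2
        exact mul_nonpos_of_nonpos_of_nonneg hc2 hb.le
      have t1 : 24 * (13 * b - 11 + 7 * (ξ * b) + 8 * δ) * b ^ 2 * x ≤ 0 := by
        apply mul_nonpos_of_nonpos_of_nonneg _ hx
        apply mul_nonpos_of_nonpos_of_nonneg _ hb2
        linarith
      have t0 : 144 * (δ - (1 - b - ξ * b)) * b ^ 3 ≤ 0 := by
        apply mul_nonpos_of_nonpos_of_nonneg _ hb3'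
        linarith
      have : (32 * b - 24 + 12 * δ) * x ^ 3
          + (184 * b - 144 + 49 * (ξ * b) + 84 * δ) * b * x ^ 2
          + 24 * (13 * b - 11 + 7 * (ξ * b) + 8 * δ) * b ^ 2 * x
          + 144 * (δ - (1 - b - ξ * b)) * b ^ 3 ≤ 0 := by
        linarith [t3, t2, t1, t0]
      exact mul_nonpos_of_nonneg_of_nonpos hξ0.le this
    have hS : (0:ℝ) ≤ (6 * (x + 2 * b) * y - ξ * b * (7 * x + 12 * b)) ^ 2 := sq_nonneg _
    have hTK : 36 * (x + 2 * b) * K ≤ 0 := by rw [hT]; linarith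
    have h36 : (0:ℝ) < 36 * (x + 2 * b) := by positivity
    have hTK' : (36 * (x + 2 * b)) * K ≤ (36 * (x + 2 * b)) * 0 := by
      rw [mul_zero]; linarith [hTK]
    exact le_of_mul_le_mul_left hTK' h36
  -- deduce the original inequality from key2
  have key : (2 * b * ((4 / 3) * x + b) + x * (y - 1)) * ((1 / 3) * x + b)
      - (x * y + ξ⁻¹ * y ^ 2) * (x + 2 * b)
      + (2 * y - 1 + δ) * ((x + 2 * b) * ((1 / 3) * x + b)) ≤ 0 := by
    have hrw : (2 * b * ((4 / 3) * x + b) + x * (y - 1)) * ((1 / 3) * x + b)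
        - (x * y + ξ⁻¹ * y ^ 2) * (x + 2 * b)
        + (2 * y - 1 + δ) * ((x + 2 * b) * ((1 / 3) * x + b))
        = ξ⁻¹ * (ξ * ((2 * b * ((4 / 3) * x + b) + x * (y - 1)) * ((1 / 3) * x + b))
          - (ξ * (x * y) + y ^ 2) * (x + 2 * b)
          + ξ * (2 * y - 1 + δ) * ((x + 2 * b) * ((1 / 3) * x + b))) := by
      field_simp
    rw [hrw]
    exact mul_nonpos_of_nonneg_of_nonpos (by positivity) key2
  have e : (2 * b * ((4 / 3) * x + b) + x * (y - 1)) / (x + 2 * b)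
        - (x * y + ξ⁻¹ * y ^ 2) / ((1 / 3) * x + b) + 2 * y - 1 + δ
      = ((2 * b * ((4 / 3) * x + b) + x * (y - 1)) * ((1 / 3) * x + b)
        - (x * y + ξ⁻¹ * y ^ 2) * (x + 2 * b)
        + (2 * y - 1 + δ) * ((x + 2 * b) * ((1 / 3) * x + b)))
        / ((x + 2 * b) * ((1 / 3) * x + b)) := by
    field_simp
    ring
  have hfin : (2 * b * ((4 / 3) * x + b) + x * (y - 1)) / (x + 2 * b)
        - (x * y + ξ⁻¹ * y ^ 2) / ((1 / 3) * x + b) + 2 * y - 1 + δ ≤ 0 := by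
    rw [e]
    exact div_nonpos_of_nonpos_of_nonneg key (by positivity)
  linarith
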